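/- Let M be a p×q real matrix with nonnegative entries all of whose column sums equal 1, with p ≥ 2. For any ε > 0 there exists a p×q matrix M′ such that: all entries of M′ are positive and all of its column sums equal 1; every entry of M′ differs from the corresponding entry of M by less than ε; and some positive scalar multiple of M′ has all entries positive odd integers. -/

import Mathlib

/-- Any column-stochastic `p × q` matrix (`p ≥ 2`) can be approximated entrywise within
`ε` by a column-stochastic matrix with positive entries having a positive scalar multiple
all of whose entries are positive odd integers. -/
theorem stmt10 (p q : ℕ) (hp : 2 ≤ p) (M : Matrix (Fin p) (Fin q) ℝ)
    (hM0 : ∀ i j, 0 ≤ M i j) (hM1 : ∀ j, ∑ i, M i j = 1) (ε : ℝ) (hε : 0 < ε) :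
    ∃ M' : Matrix (Fin p) (Fin q) ℝ,
      (∀ i j, 0 < M' i j) ∧ (∀ j, ∑ i, M' i j = 1) ∧
      (∀ i j, |M' i j - M i j| < ε) ∧
      ∃ c : ℝ, 0 < c ∧ ∀ i j, ∃ m : ℕ, c * M' i j = 2 * (m : ℝ) + 1 := by
  haveI : NeZero p := ⟨by omega⟩
  have hp0 : (0:ℝ) < p := by exact_mod_cast (by omega : 0 < p)
  have hp1 : (1:ℝ) ≤ (p:ℝ) - 1 := by
    have : (2:ℝ) ≤ p := by exact_mod_cast hp
    linarith
  -- the mixing parameter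
  obtain ⟨δ, hδpos, hδle, hδhalf⟩ : ∃ δ : ℝ, 0 < δ ∧ δ ≤ ε/2 ∧ δ ≤ 1/2 :=
    ⟨min (ε/2) (1/2), lt_min (by linarith) (by norm_num), min_le_left _ _,
      min_le_right _ _⟩
  -- the denominator, with the right parity
  obtain ⟨N, K, hNK, hNpos, hN_delta, hN_eps⟩ :
      ∃ N K : ℕ, N = 2*K + p ∧ 0 < N ∧ (p:ℝ)^2/δ ≤ N ∧ 2*(p:ℝ)/ε ≤ N := by
    refine ⟨2*(⌈(p:ℝ)^2/δ⌉₊ + ⌈2*(p:ℝ)/ε⌉₊ + 1) + p,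
      ⌈(p:ℝ)^2/δ⌉₊ + ⌈2*(p:ℝ)/ε⌉₊ + 1, rfl, by omega, ?_, ?_⟩
    · have h1 : (p:ℝ)^2/δ ≤ (⌈(p:ℝ)^2/δ⌉₊ : ℝ) := Nat.le_ceil _
      have h2 : (⌈(p:ℝ)^2/δ⌉₊ : ℕ) ≤ 2*(⌈(p:ℝ)^2/δ⌉₊ + ⌈2*(p:ℝ)/ε⌉₊ + 1) + p := by
        omega
      have h2' : ((⌈(p:ℝ)^2/δ⌉₊ : ℕ) : ℝ)
          ≤ ((2*(⌈(p:ℝ)^2/δ⌉₊ + ⌈2*(p:ℝ)/ε⌉₊ + 1) + p : ℕ) : ℝ) := by exact_mod_cast h2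
      linarith
    · have h1 : 2*(p:ℝ)/ε ≤ (⌈2*(p:ℝ)/ε⌉₊ : ℝ) := Nat.le_ceil _
      have h2 : (⌈2*(p:ℝ)/ε⌉₊ : ℕ) ≤ 2*(⌈(p:ℝ)^2/δ⌉₊ + ⌈2*(p:ℝ)/ε⌉₊ + 1) + p := by
        omega
      have h2' : ((⌈2*(p:ℝ)/ε⌉₊ : ℕ) : ℝ)
          ≤ ((2*(⌈(p:ℝ)^2/δ⌉₊ + ⌈2*(p:ℝ)/ε⌉₊ + 1) + p : ℕ) : ℝ) := by exact_mod_cast h2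
      linarith
  have hNR : (0:ℝ) < N := by exact_mod_cast hNpos
  -- the perturbed matrix with positive entries
  set M₁ : Matrix (Fin p) (Fin q) ℝ := fun i j => (1-δ) * M i j + δ/p with hM₁def
  clear_value M₁
  have hM₁lb : ∀ i j, δ/p ≤ M₁ i j := by
    intro i j
    have h1 : 0 ≤ (1-δ) * M i j := mul_nonneg (by linarith) (hM0 i j)
    rw [hM₁def]
    dsimp only
    linarith
  have hM₁pos : ∀ i j, 0 < M₁ i j := fun i j =>
    lt_of_lt_of_le (div_pos hδpos hp0) (hM₁lb i j)
  have hM₁sum : ∀ j, ∑ i, M₁ i j = 1 := by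
    intro j
    rw [hM₁def]
    dsimp only
    rw [Finset.sum_add_distrib, ← Finset.mul_sum, hM1 j, Finset.sum_const,
      Finset.card_univ, Fintype.card_fin, nsmul_eq_mul]
    field_simp
    ring
  have hMub : ∀ i j, M i j ≤ 1 := by
    intro i j
    have := Finset.single_le_sum (f := fun i => M i j) (fun i _ => hM0 i j)
      (Finset.mem_univ i)
    rw [hM1 j] at this
    exact this
  have hM₁close : ∀ i j, |M₁ i j - M i j| ≤ δ := by
    intro i j
    have h1 : M₁ i j - M i j = δ * (1/p - M i j) := by
      rw [hM₁def]; dsimp only; field_simp; ring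
    rw [h1, abs_mul, abs_of_pos hδpos]
    have h2 : |1/(p:ℝ) - M i j| ≤ 1 := by
      rw [abs_le]
      constructor
      · have := hMub i j
        have hple : 1/(p:ℝ) ≥ 0 := by positivity
        linarith
      · have h3 : 1/(p:ℝ) ≤ 1 := by
          rw [div_le_one hp0]; linarith
        linarith [hM0 i j]
    nlinarith [hδpos.le]
  clear hM₁def
  -- the integer entries
  set B : Fin p → Fin q → ℤ := fun i j => 2 * ⌊(N:ℝ) * M₁ i j / 2⌋ + 1 with hBdef
  clear_value B
  have hBx : ∀ i j, |(B i j : ℝ) - N * M₁ i j| ≤ 1 := by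
    intro i j
    have h1 : (⌊(N:ℝ) * M₁ i j / 2⌋ : ℝ) ≤ (N:ℝ) * M₁ i j / 2 := Int.floor_le _
    have h2 : (N:ℝ) * M₁ i j / 2 - 1 < (⌊(N:ℝ) * M₁ i j / 2⌋ : ℝ) :=
      Int.sub_one_lt_floor _
    rw [abs_le, hBdef]
    dsimp only
    push_cast
    constructor <;> linarith
  have hB1 : ∀ i j, 1 ≤ B i j := by
    intro i j
    have hx : 0 ≤ (N:ℝ) * M₁ i j / 2 :=
      div_nonneg (mul_nonneg hNR.le (hM₁pos i j).le) (by norm_num)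
    have := Int.floor_nonneg.mpr hx
    rw [hBdef]
    dsimp only
    omega
  set A : Fin p → Fin q → ℤ := fun i j =>
    if i = 0 then (N:ℤ) - ∑ i' ∈ Finset.univ.erase 0, B i' j else B i j with hAdef
  clear_value A
  have hcard : (Finset.univ.erase (0 : Fin p)).card = p - 1 := by
    rw [Finset.card_erase_of_mem (Finset.mem_univ _), Finset.card_univ, Fintype.card_fin]
  have hcardR : ((Finset.univ.erase (0 : Fin p)).card : ℝ) = (p:ℝ) - 1 := by
    rw [hcard]
    have : 1 ≤ p := by omega
    push_cast [this]
    ring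
  have hA0 : ∀ j, A 0 j = (N:ℤ) - ∑ i' ∈ Finset.univ.erase 0, B i' j := by
    intro j; rw [hAdef]; exact if_pos rfl
  have hAi : ∀ i j, i ≠ 0 → A i j = B i j := by
    intro i j hi; rw [hAdef]; exact if_neg hi
  have hxerase : ∀ j, ∑ i ∈ Finset.univ.erase 0, (N:ℝ) * M₁ i j
      = N - N * M₁ 0 j := by
    intro j
    have h1 : (N:ℝ) * M₁ 0 j + ∑ i ∈ Finset.univ.erase 0, (N:ℝ) * M₁ i j
        = ∑ i, (N:ℝ) * M₁ i j :=
      Finset.add_sum_erase Finset.univ (fun i => (N:ℝ) * M₁ i j) (Finset.mem_univ _)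
    have h2 : ∑ i, (N:ℝ) * M₁ i j = N := by
      rw [← Finset.mul_sum, hM₁sum j, mul_one]
    linarith
  have hSbound : ∀ j, |(↑(∑ i ∈ Finset.univ.erase 0, B i j) : ℝ)
      - (N - N * M₁ 0 j)| ≤ (p:ℝ) - 1 := by
    intro j
    rw [← hxerase j]
    push_cast
    rw [← Finset.sum_sub_distrib]
    calc |∑ i ∈ Finset.univ.erase 0, ((B i j : ℝ) - N * M₁ i j)|
        ≤ ∑ i ∈ Finset.univ.erase 0, |(B i j : ℝ) - N * M₁ i j| :=
          Finset.abs_sum_le_sum_abs _ _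
      _ ≤ ∑ _i ∈ Finset.univ.erase (0 : Fin p), (1:ℝ) :=
          Finset.sum_le_sum (fun i _ => hBx i j)
      _ = (p:ℝ) - 1 := by rw [Finset.sum_const, nsmul_eq_mul, mul_one, hcardR]
  have hAx : ∀ i j, |(A i j : ℝ) - N * M₁ i j| ≤ (p:ℝ) - 1 := by
    intro i j
    by_cases hi : i = 0
    · subst hi
      have hc : ((A 0 j : ℤ) : ℝ)
          = (N:ℝ) - (↑(∑ i' ∈ Finset.univ.erase 0, B i' j) : ℝ) := by
        rw [hA0 j]; push_cast; ring
      rw [hc]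
      have he : (N:ℝ) - (↑(∑ i' ∈ Finset.univ.erase 0, B i' j) : ℝ) - N * M₁ 0 j
          = -((↑(∑ i' ∈ Finset.univ.erase 0, B i' j) : ℝ) - (N - N * M₁ 0 j)) := by
        ring
      rw [he, abs_neg]
      exact hSbound j
    · rw [hAi i j hi]
      exact le_trans (hBx i j) hp1
  have hA1 : ∀ i j, 1 ≤ A i j := by
    intro i j
    by_cases hi : i = 0
    · subst hi
      have h1 : (N:ℝ) * (δ/p) ≤ (N:ℝ) * M₁ 0 j :=
        mul_le_mul_of_nonneg_left (hM₁lb 0 j) hNR.le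
      have h2 : (p:ℝ) ≤ (N:ℝ) * (δ/p) := by
        rw [← div_le_iff₀ (div_pos hδpos hp0)]
        have h : (p:ℝ) / (δ/p) = (p:ℝ)^2/δ := by field_simp
        rw [h]
        exact hN_delta
      have h3 := hAx 0 j
      rw [abs_le] at h3
      obtain ⟨h3a, h3b⟩ := h3
      have h4 : (1:ℝ) ≤ (A 0 j : ℝ) := by linarith
      exact_mod_cast h4
    · rw [hAi i j hi]
      exact hB1 i j
  have hAodd : ∀ i j, ∃ t : ℤ, A i j = 2*t + 1 ∧ 0 ≤ t := by
    intro i j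
    have hA1' := hA1 i j
    by_cases hi : i = 0
    · subst hi
      have hS : ∑ i' ∈ Finset.univ.erase 0, B i' j
          = 2 * (∑ i' ∈ Finset.univ.erase 0, ⌊(N:ℝ) * M₁ i' j / 2⌋) + ((p:ℤ) - 1) := by
        rw [hBdef]
        dsimp only
        rw [Finset.sum_add_distrib, Finset.sum_const, ← Finset.mul_sum, hcard,
          nsmul_eq_mul, Nat.cast_sub (by omega : 1 ≤ p)]
        push_cast
        ring
      have hNZ : (N:ℤ) = 2*(K:ℤ) + (p:ℤ) := by exact_mod_cast hNK
      refine ⟨(K:ℤ) - (∑ i' ∈ Finset.univ.erase 0, ⌊(N:ℝ) * M₁ i' j / 2⌋), ?_, ?_⟩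
      · rw [hA0 j, hS, hNZ]; ring
      · rw [hA0 j, hS, hNZ] at hA1'
        omega
    · rw [hAi i j hi] at *
      rw [hBdef] at *
      exact ⟨⌊(N:ℝ) * M₁ i j / 2⌋, rfl, by dsimp only at hA1'; omega⟩
  have hAsum : ∀ j, ∑ i, A i j = (N:ℤ) := by
    intro j
    rw [← Finset.add_sum_erase Finset.univ (fun i => A i j) (Finset.mem_univ (0 : Fin p))]
    have h1 : ∑ i ∈ Finset.univ.erase 0, A i j = ∑ i ∈ Finset.univ.erase 0, B i j := by
      apply Finset.sum_congr rfl
      intro i hi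
      exact hAi i j (Finset.mem_erase.mp hi).1
    rw [h1, hA0 j]
    ring
  -- assemble
  refine ⟨fun i j => (A i j : ℝ) / N, ?_, ?_, ?_, (N:ℝ), hNR, ?_⟩
  · intro i j
    have h : (1:ℝ) ≤ (A i j : ℝ) := by exact_mod_cast hA1 i j
    have : (0:ℝ) < (A i j : ℝ) := by linarith
    exact div_pos this hNR
  · intro j
    rw [← Finset.sum_div]
    have h : (↑(∑ i, A i j) : ℝ) = (N:ℝ) := by rw [hAsum j]; push_cast; ring
    push_cast at h
    rw [h, div_self hNR.ne']
  · intro i j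
    have h1 : |(A i j : ℝ)/N - M₁ i j| ≤ ((p:ℝ) - 1)/N := by
      rw [div_sub' hNR.ne', abs_div, abs_of_pos hNR,
        div_le_div_iff_of_pos_right hNR]
      exact hAx i j
    have h2 : ((p:ℝ) - 1)/N < ε/2 := by
      rw [div_lt_iff₀ hNR]
      have h4 : 2*(p:ℝ) ≤ (N:ℝ) * ε := by
        have := hN_eps
        rw [div_le_iff₀ hε] at this
        linarith
      nlinarith
    calc |(A i j : ℝ)/N - M i j|
        ≤ |(A i j : ℝ)/N - M₁ i j| + |M₁ i j - M i j| := abs_sub_le _ _ _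
      _ ≤ ((p:ℝ) - 1)/N + δ := add_le_add h1 (hM₁close i j)
      _ < ε/2 + ε/2 := by linarith
      _ = ε := by ring
  · intro i j
    obtain ⟨t, ht, ht0⟩ := hAodd i j
    refine ⟨t.toNat, ?_⟩
    rw [mul_div_cancel₀ _ hNR.ne']
    have h : ((t.toNat : ℕ) : ℝ) = ((t : ℤ) : ℝ) := by
      exact_mod_cast congrArg (fun z : ℤ => (z:ℝ)) (Int.toNat_of_nonneg ht0)
    rw [h]
    exact_mod_cast congrArg (fun z : ℤ => (z:ℝ)) ht
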